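/- A finite simple graph G is chordal if and only if every two minimal separators of G are noncrossing, i.e., for every pair of minimal separators S₁, S₂, the set S₂ is contained in the closed neighborhood of a single connected component of G − S₁ or lies entirely within one connected component of G − S₁ together with S₁ (equivalently: S₂ does not intersect two distinct connected components of G − S₁). -/

import Mathlib

open SimpleGraph

variable {V : Type*}

/-- `D` is (the vertex set of) a connected component of `G - S`. -/
def IsCompOf (G : SimpleGraph V) (S D : Set V) : Prop :=
  D.Nonempty ∧ Disjoint D S ∧ (G.induce D).Connected ∧
    ∀ v ∈ D, ∀ w : V, G.Adj v w → w ∉ S → w ∈ D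

/-- The open neighborhood `N(D)` of a vertex set `D`. -/
def nbhd (G : SimpleGraph V) (D : Set V) : Set V :=
  {v | v ∉ D ∧ ∃ d ∈ D, G.Adj v d}

/-- The closed neighborhood `N[D]` of a vertex set `D`. -/
def closedNbhd (G : SimpleGraph V) (D : Set V) : Set V :=
  D ∪ nbhd G D

/-- `D` is full to `S`: every vertex of `S` has a neighbor in `D`. -/
def FullTo (G : SimpleGraph V) (S D : Set V) : Prop :=
  ∀ s ∈ S, ∃ d ∈ D, G.Adj s d

/-- `S` is a minimal separator: `G - S` has at least two components full to `S`. -/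
def IsMinSep (G : SimpleGraph V) (S : Set V) : Prop :=
  ∃ D₁ D₂ : Set V, IsCompOf G S D₁ ∧ IsCompOf G S D₂ ∧ D₁ ≠ D₂ ∧
    FullTo G S D₁ ∧ FullTo G S D₂

/-- A graph is chordal if it has no induced cycle of length at least 4. -/
def IsChordal (G : SimpleGraph V) : Prop :=
  ∀ n : ℕ, 4 ≤ n → IsEmpty (cycleGraph n ↪g G)

/-- `S₁` crosses `S₂`: `S₂` intersects at least two connected components of `G - S₁`. -/
def Crosses (G : SimpleGraph V) (S₁ S₂ : Set V) : Prop :=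
  ∃ D D' : Set V, IsCompOf G S₁ D ∧ IsCompOf G S₁ D' ∧ D ≠ D' ∧
    (S₂ ∩ D).Nonempty ∧ (S₂ ∩ D').Nonempty

/-- reachability avoiding a set `S` -/
def Avoid (G : SimpleGraph V) (S : Set V) (u v : V) : Prop :=
  ∃ p : G.Walk u v, ∀ x ∈ p.support, x ∉ S

namespace Avoid

variable {G : SimpleGraph V} {S : Set V} {u v w : V}

lemma refl (hu : u ∉ S) : Avoid G S u u := ⟨Walk.nil, by simp [hu]⟩

lemma symm (h : Avoid G S u v) : Avoid G S v u := by
  obtain ⟨p, hp⟩ := h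
  exact ⟨p.reverse, by simpa using hp⟩

lemma trans (h : Avoid G S u v) (h' : Avoid G S v w) : Avoid G S u w := by
  obtain ⟨p, hp⟩ := h; obtain ⟨q, hq⟩ := h'
  refine ⟨p.append q, ?_⟩
  intro x hx
  rcases (Walk.mem_support_append_iff _ _).1 hx with h | h
  · exact hp x h
  · exact hq x h

lemma left_notMem (h : Avoid G S u v) : u ∉ S := by
  obtain ⟨p, hp⟩ := h; exact hp u p.start_mem_support

lemma right_notMem (h : Avoid G S u v) : v ∉ S := by
  obtain ⟨p, hp⟩ := h; exact hp v p.end_mem_support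

lemma adj (h : G.Adj u v) (hu : u ∉ S) (hv : v ∉ S) : Avoid G S u v :=
  ⟨Walk.cons h Walk.nil, by simp [hu, hv]⟩

/-- every vertex on an avoiding walk is `Avoid`-reachable from the start -/
lemma of_mem_support {p : G.Walk u v} (hp : ∀ x ∈ p.support, x ∉ S)
    (hw : w ∈ p.support) : Avoid G S u w := by
  induction p with
  | nil => simp at hw; subst hw; exact refl (hp _ (by simp))
  | @cons a b c hadj q ih =>
    rcases (by simpa using hw : w = a ∨ w ∈ q.support) with rfl | hw'
    · exact refl (hp _ (by simp))
    · have hq : ∀ x ∈ q.support, x ∉ S := fun x hx => hp x (by simp [hx])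
      exact (adj hadj (hp _ (by simp)) (hq _ q.start_mem_support)).trans (ih hq hw')

end Avoid

/-- the component of `v` in `G - S` -/
def compSet (G : SimpleGraph V) (S : Set V) (v : V) : Set V := {w | Avoid G S v w}

lemma mem_compSet_self {G : SimpleGraph V} {S : Set V} {v : V} (hv : v ∉ S) :
    v ∈ compSet G S v := Avoid.refl hv

/-- transfer a walk with support in `D` to a reachability statement in the induced graph -/
lemma induce_reachable_of_walk {G : SimpleGraph V} {D : Set V} {u v : V}
    (p : G.Walk u v) (hp : ∀ x ∈ p.support, x ∈ D) (hu : u ∈ D) (hv : v ∈ D) :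
    (G.induce D).Reachable ⟨u, hu⟩ ⟨v, hv⟩ := by
  induction p with
  | nil => rfl
  | @cons a b c hadj q ih =>
    have hb : b ∈ D := hp b (by simp)
    have hq : ∀ x ∈ q.support, x ∈ D := fun x hx => hp x (by simp [hx])
    exact (SimpleGraph.Adj.reachable (by simpa using hadj :
      (G.induce D).Adj ⟨a, hu⟩ ⟨b, hb⟩)).trans (ih hq hb hv)

/-- transfer reachability in the induced graph to an avoiding walk -/
lemma avoid_of_induce_reachable {G : SimpleGraph V} {S D : Set V} (hDS : Disjoint D S)
    {u v : D} (h : (G.induce D).Reachable u v) : Avoid G S u.1 v.1 := by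
  obtain ⟨q⟩ := h
  refine ⟨q.map (SimpleGraph.Embedding.induce D).toHom, ?_⟩
  intro x hx
  erw [Walk.support_map, List.mem_map] at hx
  obtain ⟨y, _, rfl⟩ := hx
  exact fun hxS => (hDS.ne_of_mem y.2 hxS) rfl


lemma compSet_disjoint (G : SimpleGraph V) (S : Set V) (v : V) :
    Disjoint (compSet G S v) S :=
  Set.disjoint_left.2 fun _ hx => hx.right_notMem

lemma isCompOf_compSet {G : SimpleGraph V} {S : Set V} {v : V} (hv : v ∉ S) :
    IsCompOf G S (compSet G S v) := by
  refine ⟨⟨v, mem_compSet_self hv⟩, compSet_disjoint G S v,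
    (connected_iff _).2 ⟨?_, ⟨⟨v, mem_compSet_self hv⟩⟩⟩, ?_⟩
  · rintro ⟨u, hu⟩ ⟨w, hw⟩
    obtain ⟨p, hp⟩ := (Avoid.symm hu).trans hw
    exact induce_reachable_of_walk p
      (fun x hx => (hu.trans (Avoid.of_mem_support hp hx) : Avoid G S v x)) hu hw
  · intro u hu w hadj hw
    exact (hu : Avoid G S v u).trans (Avoid.adj hadj hu.right_notMem hw)

lemma walk_stays {G : SimpleGraph V} {S D : Set V}
    (hclose : ∀ v ∈ D, ∀ w : V, G.Adj v w → w ∉ S → w ∈ D) :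
    ∀ {u w : V} (p : G.Walk u w), u ∈ D → (∀ x ∈ p.support, x ∉ S) → w ∈ D := by
  intro u w p
  induction p with
  | nil => exact fun h _ => h
  | @cons a b c hadj q ih =>
    intro ha hp
    exact ih (hclose a ha b hadj (hp b (by simp))) (fun x hx => hp x (by simp [hx]))

lemma IsCompOf.eq_compSet {G : SimpleGraph V} {S D : Set V} (hD : IsCompOf G S D)
    {v : V} (hv : v ∈ D) : D = compSet G S v := by
  obtain ⟨hne, hdisj, hconn, hclose⟩ := hD
  apply Set.eq_of_subset_of_subset
  · intro w hw
    exact avoid_of_induce_reachable hdisj (hconn.preconnected ⟨v, hv⟩ ⟨w, hw⟩)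
  · intro w hw
    obtain ⟨p, hp⟩ := (hw : Avoid G S v w)
    exact walk_stays hclose p hv hp

lemma IsCompOf.eq_of_mem {G : SimpleGraph V} {S D D' : Set V} (hD : IsCompOf G S D)
    (hD' : IsCompOf G S D') {v : V} (hv : v ∈ D) (hv' : v ∈ D') : D = D' := by
  rw [hD.eq_compSet hv, hD'.eq_compSet hv']

lemma IsCompOf.not_adj {G : SimpleGraph V} {S D D' : Set V} (hD : IsCompOf G S D)
    (hD' : IsCompOf G S D') (hne : D ≠ D') {u w : V} (hu : u ∈ D) (hw : w ∈ D') :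
    u ≠ w ∧ ¬ G.Adj u w := by
  constructor
  · rintro rfl; exact hne (hD.eq_of_mem hD' hu hw)
  · intro hadj
    exact hne (hD.eq_of_mem hD' (hD.2.2.2 u hu w hadj (hD'.2.1.ne_of_mem hw · rfl)) hw)


lemma walk_two {G : SimpleGraph V} {a b : V} (hab : a ≠ b) (hadj : ¬ G.Adj a b) :
    ∀ (p : G.Walk a b), ¬ (∀ x ∈ p.support, x = a ∨ x = b) := by
  intro p
  cases p with
  | nil => exact absurd rfl hab
  | @cons a c b h q =>
    intro hsup
    rcases hsup c (by simp) with rfl | rfl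
    · exact G.irrefl h
    · exact hadj h

lemma first_hit {G : SimpleGraph V} {S : Set V} {s : V} (hs : s ∈ S) :
    ∀ {a b : V} (p : G.Walk a b), (∀ x ∈ p.support, x ∉ S \ {s}) → a ∉ S →
      s ∈ p.support → ∃ u, G.Adj u s ∧ Avoid G S a u := by
  intro a b p
  induction p with
  | nil =>
    intro _ ha hsup
    simp only [Walk.support_nil, List.mem_singleton] at hsup
    exact absurd (hsup ▸ hs) ha
  | @cons a c b hadj q ih =>
    intro hp ha hsup
    by_cases hc : c = s
    · exact ⟨a, hc ▸ hadj, Avoid.refl ha⟩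
    · have hcS : c ∉ S := fun h => hp c (by simp) ⟨h, hc⟩
      have hsq : s ∈ q.support := by
        rcases (by simpa using hsup : s = a ∨ s ∈ q.support) with rfl | h
        · exact absurd hs ha
        · exact h
      obtain ⟨u, hu1, hu2⟩ := ih (fun x hx => hp x (by simp [hx])) hcS hsq
      exact ⟨u, hu1, (Avoid.adj hadj ha hcS).trans hu2⟩

theorem exists_minimal_sep [Fintype V] {G : SimpleGraph V} {a b : V} (hab : a ≠ b)
    (hadj : ¬ G.Adj a b) :
    ∃ S : Set V, a ∉ S ∧ b ∉ S ∧ ¬ Avoid G S a b ∧ IsMinSep G S ∧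
      IsCompOf G S (compSet G S a) ∧ IsCompOf G S (compSet G S b) ∧
      compSet G S a ≠ compSet G S b ∧ a ∈ compSet G S a ∧ b ∈ compSet G S b := by
  classical
  set P : Finset V → Prop := fun S => a ∉ S ∧ b ∉ S ∧ ¬ Avoid G ↑S a b with hP
  have hT₀ : P (Finset.univ \ {a, b}) := by
    refine ⟨by simp, by simp, ?_⟩
    rintro ⟨p, hp⟩
    refine walk_two hab hadj p (fun x hx => ?_)
    have := hp x hx
    simp only [Finset.coe_sdiff, Finset.coe_univ, Finset.coe_insert, Finset.coe_singleton,
      Set.mem_diff, Set.mem_univ, true_and, Set.mem_insert_iff, Set.mem_singleton_iff,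
      not_not, not_and] at this
    tauto
  obtain ⟨S, hSmem, hmin⟩ := Finset.exists_min_image
    (Finset.univ.filter P) Finset.card ⟨_, Finset.mem_filter.2 ⟨Finset.mem_univ _, hT₀⟩⟩
  rw [Finset.mem_filter] at hSmem
  obtain ⟨-, haS, hbS, hsep⟩ := hSmem
  have hfull : ∀ s ∈ S, (∃ u ∈ compSet G (↑S) a, G.Adj s u) ∧
      (∃ u ∈ compSet G (↑S) b, G.Adj s u) := by
    intro s hsS
    have herase : ¬ P (S.erase s) := by
      intro hPe
      have := hmin _ (Finset.mem_filter.2 ⟨Finset.mem_univ _, hPe⟩)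
      have hlt : (S.erase s).card < S.card := Finset.card_erase_lt_of_mem hsS
      omega
    have havoid : Avoid G (↑(S.erase s)) a b := by
      by_contra h
      exact herase ⟨fun h' => haS (Finset.mem_of_mem_erase h'),
        fun h' => hbS (Finset.mem_of_mem_erase h'), h⟩
    obtain ⟨p, hp⟩ := havoid
    have hp' : ∀ x ∈ p.support, x ∉ (↑S : Set V) \ {s} := by
      intro x hx
      have := hp x hx
      simpa [Finset.coe_erase] using this
    have hsp : s ∈ p.support := by
      by_contra h
      exact hsep ⟨p, fun x hx hxS => h (by
        rcases eq_or_ne x s with rfl | hne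
        · exact hx
        · exact absurd ⟨hxS, hne⟩ (hp' x hx))⟩
    constructor
    · obtain ⟨u, hu1, hu2⟩ := first_hit (by exact_mod_cast hsS) p hp' (by exact_mod_cast haS) hsp
      exact ⟨u, hu2, hu1.symm⟩
    · obtain ⟨u, hu1, hu2⟩ := first_hit (by exact_mod_cast hsS) p.reverse
        (by simpa using hp') (by exact_mod_cast hbS) (by simpa using hsp)
      exact ⟨u, hu2, hu1.symm⟩
  have haS' : a ∉ (↑S : Set V) := by exact_mod_cast haS
  have hbS' : b ∉ (↑S : Set V) := by exact_mod_cast hbS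
  have hca := isCompOf_compSet (G := G) haS'
  have hcb := isCompOf_compSet (G := G) hbS'
  have hne : compSet G (↑S) a ≠ compSet G (↑S) b := by
    intro h
    exact hsep (by
      have : b ∈ compSet G (↑S) a := h ▸ mem_compSet_self hbS'
      exact this)
  refine ⟨↑S, haS', hbS', hsep, ⟨compSet G ↑S a, compSet G ↑S b, hca, hcb, hne, ?_, ?_⟩,
    hca, hcb, hne, mem_compSet_self haS', mem_compSet_self hbS'⟩
  · intro s hsS
    exact (hfull s (by exact_mod_cast hsS)).1
  · intro s hsS
    exact (hfull s (by exact_mod_cast hsS)).2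


lemma getVert_mem_support {G : SimpleGraph V} {x y : V} (p : G.Walk x y) {i : ℕ}
    (hi : i ≤ p.length) : p.getVert i ∈ p.support :=
  Walk.mem_support_iff_exists_getVert.2 ⟨i, rfl, hi⟩

lemma getVert_nil {G : SimpleGraph V} (u : V) (i : ℕ) :
    (Walk.nil : G.Walk u u).getVert i = u :=
  Walk.getVert_of_length_le _ (by simp)

lemma exists_prefix {G : SimpleGraph V} {x y : V} (p : G.Walk x y) (i : ℕ) :
    ∃ q : G.Walk x (p.getVert i), q.length = min i p.length ∧
      ∀ z ∈ q.support, z ∈ p.support := by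
  induction p generalizing i with
  | nil => exact ⟨Walk.nil, by simp, by simp⟩
  | @cons a c b hadj q ih =>
    cases i with
    | zero => exact ⟨Walk.nil, by show 0 = _; simp, by
        intro z hz; obtain rfl := List.mem_singleton.1 hz; exact Walk.start_mem_support _⟩
    | succ i =>
      obtain ⟨q', hq1, hq2⟩ := ih i
      exact ⟨Walk.cons hadj q', by show q'.length + 1 = _; simp only [Walk.length_cons, hq1]; omega, by
        intro z hz
        rcases (by simpa using hz : z = a ∨ z ∈ q'.support) with rfl | hz'
        · simp
        · simp [hq2 z hz']⟩

lemma exists_suffix {G : SimpleGraph V} {x y : V} (p : G.Walk x y) (i : ℕ) :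
    ∃ q : G.Walk (p.getVert i) y, q.length = p.length - i ∧
      ∀ z ∈ q.support, z ∈ p.support := by
  induction p generalizing i with
  | nil =>
    rw [getVert_nil]
    exact ⟨Walk.nil, by simp, by simp⟩
  | @cons a c b hadj q ih =>
    cases i with
    | zero => exact ⟨Walk.cons hadj q, by show q.length + 1 = _; simp, by
        intro z hz; exact hz⟩
    | succ i =>
      obtain ⟨q', hq1, hq2⟩ := ih i
      exact ⟨q', by simpa using hq1, fun z hz => by simp [hq2 z hz]⟩

lemma aux_getVert_inj {G : SimpleGraph V} {x y : V} {p : G.Walk x y} (hp : p.IsPath)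
    {i j : ℕ} (hi : i ≤ p.length) (hj : j ≤ p.length)
    (h : p.getVert i = p.getVert j) : i = j := by
  induction p generalizing i j with
  | nil => simp only [Walk.length_nil, Nat.le_zero] at hi hj; omega
  | @cons a c b hadj q ih =>
    rw [Walk.cons_isPath_iff] at hp
    cases i with
    | zero =>
      cases j with
      | zero => rfl
      | succ j =>
        rw [Walk.getVert_zero, Walk.getVert_cons_succ] at h
        exact absurd (h ▸ getVert_mem_support q (by simpa using hj)) hp.2
    | succ i =>
      cases j with
      | zero =>
        rw [Walk.getVert_zero, Walk.getVert_cons_succ] at h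
        exact absurd (h ▸ getVert_mem_support q (by simpa using hi)) hp.2
      | succ j =>
        rw [Walk.getVert_cons_succ, Walk.getVert_cons_succ] at h
        have := ih hp.1 (by simpa using hi) (by simpa using hj) h
        omega

theorem exists_induced_arc {G : SimpleGraph V} {D : Set V} {x y : V}
    (hx : x ∉ D) (hy : y ∉ D) (hxy : x ≠ y) (hnadj : ¬ G.Adj x y)
    (hxD : ∃ d ∈ D, G.Adj x d) (hyD : ∃ d ∈ D, G.Adj y d)
    (hconn : (G.induce D).Connected) :
    ∃ p : G.Walk x y, p.IsPath ∧ 2 ≤ p.length ∧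
      (∀ z ∈ p.support, z = x ∨ z = y ∨ z ∈ D) ∧
      (∀ i j, i < j → j ≤ p.length → G.Adj (p.getVert i) (p.getVert j) → j = i + 1) := by
  classical
  set C : G.Walk x y → Prop := fun p => ∀ z ∈ p.support, z = x ∨ z = y ∨ z ∈ D with hC
  obtain ⟨d₁, hd₁, had₁⟩ := hxD
  obtain ⟨d₂, hd₂, had₂⟩ := hyD
  have hw0 : ∃ w : G.Walk d₁ d₂, ∀ z ∈ w.support, z ∈ D := by
    obtain ⟨w⟩ := hconn.preconnected ⟨d₁, hd₁⟩ ⟨d₂, hd₂⟩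
    refine ⟨w.map (SimpleGraph.Embedding.induce D).toHom, ?_⟩
    intro z hz
    erw [Walk.support_map, List.mem_map] at hz
    obtain ⟨u, _, rfl⟩ := hz
    exact u.2
  obtain ⟨w0, hw0'⟩ := hw0
  have exS : ∃ m : ℕ, ∃ p : G.Walk x y, C p ∧ p.length = m := by
    refine ⟨_, Walk.cons had₁ (w0.append (Walk.cons had₂.symm Walk.nil)), ?_, rfl⟩
    intro z hz
    simp only [Walk.support_cons, Walk.mem_support_append_iff, List.mem_cons] at hz
    rcases hz with rfl | hz | hz
    · exact Or.inl rfl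
    · exact Or.inr (Or.inr (hw0' z hz))
    · simp only [Walk.support_cons, Walk.support_nil, List.mem_cons,
        List.mem_singleton] at hz
      rcases hz with rfl | hz
      · exact Or.inr (Or.inr hd₂)
      · exact Or.inr (Or.inl (by simpa using hz))
  set n := Nat.find exS with hn
  obtain ⟨p₁, hC₁, hlen₁⟩ := Nat.find_spec exS
  set p := p₁.bypass with hpdef
  have hCp : C p := fun z hz => hC₁ z (Walk.support_bypass_subset p₁ hz)
  have hplen : p.length = n := by
    have h1 : p.length ≤ n := by
      rw [hn, ← hlen₁]; exact Walk.length_bypass_le p₁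
    have h2 : ¬ p.length < n := fun h => Nat.find_min exS h ⟨p, hCp, rfl⟩
    omega
  have hmin : ∀ q : G.Walk x y, C q → n ≤ q.length := by
    intro q hq
    by_contra h
    exact Nat.find_min exS (by omega) ⟨q, hq, rfl⟩
  have hpath : p.IsPath := Walk.bypass_isPath p₁
  have hlen2 : 2 ≤ p.length := by
    have h0 : p.length ≠ 0 := fun h0 => hxy (Walk.eq_of_length_eq_zero h0)
    have h1 : p.length ≠ 1 := by
      intro h1
      apply hnadj
      have hadj01 := p.adj_getVert_succ (i := 0) (by omega)
      have h1y : p.getVert (0 + 1) = y := by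
        rw [(by omega : (0:ℕ) + 1 = p.length)]; exact p.getVert_length
      rwa [Walk.getVert_zero, h1y] at hadj01
    omega
  refine ⟨p, hpath, hlen2, hCp, ?_⟩
  intro i j hij hjle hadj
  by_contra hne
  have hij2 : i + 2 ≤ j := by omega
  obtain ⟨q₁, hq₁len, hq₁sup⟩ := exists_prefix p i
  obtain ⟨q₂, hq₂len, hq₂sup⟩ := exists_suffix p j
  have hq : C (q₁.append (Walk.cons hadj q₂)) := by
    intro z hz
    rw [Walk.mem_support_append_iff] at hz
    rcases hz with hz | hz
    · exact hCp z (hq₁sup z hz)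
    · rcases (by simpa using hz : z = p.getVert i ∨ z ∈ q₂.support) with rfl | hz'
      · exact hCp _ (getVert_mem_support p (by omega))
      · exact hCp z (hq₂sup z hz')
  have := hmin _ hq
  rw [Walk.length_append, Walk.length_cons] at this
  omega


lemma cyc_mod_lemma {m a b : ℕ} (hm : 2 ≤ m) (ha : a < m) (hb : b < m) :
    ((m - b) + a) % m = 1 ↔ (a = b + 1 ∨ (b = m - 1 ∧ a = 0)) := by
  rcases le_or_gt b a with h | h
  · have he : (m - b) + a = (a - b) + m := by omega
    rw [he, Nat.add_mod_right, Nat.mod_eq_of_lt (by omega)]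
    constructor
    · intro h1
      exact Or.inl (by omega)
    · rintro (h1 | ⟨h1, h2⟩) <;> omega
  · rw [Nat.mod_eq_of_lt (by omega)]
    constructor
    · intro h1
      exact Or.inr ⟨by omega, by omega⟩
    · rintro (h1 | ⟨h1, h2⟩) <;> omega

lemma cycleGraph_adj_iff {n : ℕ} (hn : 2 ≤ n) (u v : Fin n) :
    (cycleGraph n).Adj u v ↔ (u.val = v.val + 1 ∨ v.val = u.val + 1 ∨
      (u.val = 0 ∧ v.val = n - 1) ∨ (v.val = 0 ∧ u.val = n - 1)) := by
  rw [cycleGraph_adj', Fin.sub_def, Fin.sub_def]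
  simp only []
  rw [cyc_mod_lemma hn u.isLt v.isLt, cyc_mod_lemma hn v.isLt u.isLt]
  tauto

lemma interior_mem {G : SimpleGraph V} {D : Set V} {x y : V} {p : G.Walk x y}
    (hpath : p.IsPath)
    (hsup : ∀ z ∈ p.support, z = x ∨ z = y ∨ z ∈ D)
    {k : ℕ} (h0 : 0 < k) (hk : k < p.length) : p.getVert k ∈ D := by
  rcases hsup _ (getVert_mem_support p (le_of_lt hk)) with h | h | h
  · have h' : p.getVert k = p.getVert 0 := by rw [p.getVert_zero]; exact h
    exact absurd (aux_getVert_inj hpath (by omega) (by omega) h') (by omega)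
  · have h' : p.getVert k = p.getVert p.length := by rw [p.getVert_length]; exact h
    exact absurd (aux_getVert_inj hpath (by omega) le_rfl h') (by omega)
  · exact h

theorem cycle_of_two_arcs {G : SimpleGraph V} {D₁ D₂ : Set V} {x y : V}
    (hsep : ∀ u ∈ D₁, ∀ v ∈ D₂, u ≠ v ∧ ¬ G.Adj u v)
    (hx1 : x ∉ D₁) (hy1 : y ∉ D₁) (hx2 : x ∉ D₂) (hy2 : y ∉ D₂)
    (hxy : x ≠ y) (hnadj : ¬ G.Adj x y)
    (p₁ : G.Walk x y) (h₁path : p₁.IsPath) (h₁len : 2 ≤ p₁.length)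
    (h₁sup : ∀ z ∈ p₁.support, z = x ∨ z = y ∨ z ∈ D₁)
    (h₁ind : ∀ i j, i < j → j ≤ p₁.length → G.Adj (p₁.getVert i) (p₁.getVert j) → j = i + 1)
    (p₂ : G.Walk x y) (h₂path : p₂.IsPath) (h₂len : 2 ≤ p₂.length)
    (h₂sup : ∀ z ∈ p₂.support, z = x ∨ z = y ∨ z ∈ D₂)
    (h₂ind : ∀ i j, i < j → j ≤ p₂.length → G.Adj (p₂.getVert i) (p₂.getVert j) → j = i + 1) :
    ∃ m, 4 ≤ m ∧ Nonempty (cycleGraph m ↪g G) := by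
  set r := p₁.length with hr
  set s := p₂.length with hs
  set m := r + s with hm
  set c : ℕ → V := fun k => if k ≤ r then p₁.getVert k else p₂.getVert (m - k) with hc
  have hc0 : c 0 = x := by simp [hc]
  have hcleft : ∀ k, k ≤ r → c k = p₁.getVert k := by
    intro k hk; simp [hc, hk]
  have hcright : ∀ k, r ≤ k → c k = p₂.getVert (m - k) := by
    intro k hk
    rcases eq_or_lt_of_le hk with h' | hlt
    · rw [hcleft k (by omega), Walk.getVert_of_length_le _ (by omega : p₁.length ≤ k),
        Walk.getVert_of_length_le _ (by omega : p₂.length ≤ m - k)]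
    · simp [hc, Nat.not_le.2 hlt]
  have hintD₁ : ∀ k, 0 < k → k < r → c k ∈ D₁ := by
    intro k h0 hk
    rw [hcleft k (le_of_lt hk)]
    exact interior_mem h₁path h₁sup h0 hk
  have hintD₂ : ∀ k, r < k → k < m → c k ∈ D₂ := by
    intro k hrk hkm
    rw [hcright k (le_of_lt hrk)]
    exact interior_mem h₂path h₂sup (by omega) (by omega)
  -- adjacency of consecutive vertices
  have hAdjSucc : ∀ k, k + 1 < m → G.Adj (c k) (c (k + 1)) := by
    intro k hk
    rcases le_or_gt (k + 1) r with h | h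
    · rw [hcleft k (by omega), hcleft (k + 1) h]
      exact p₁.adj_getVert_succ (by omega)
    · rw [hcright k (by omega), hcright (k + 1) (by omega)]
      have he : m - k = (m - (k + 1)) + 1 := by omega
      rw [he]
      exact (p₂.adj_getVert_succ (by omega)).symm
  have hAdjWrap : G.Adj (c (m - 1)) (c 0) := by
    rw [hc0, hcright (m - 1) (by omega)]
    have he : m - (m - 1) = 1 := by omega
    rw [he]
    have := p₂.adj_getVert_succ (i := 0) (by omega)
    rw [p₂.getVert_zero] at this
    exact this.symm
  -- only consecutive vertices are adjacent
  have hAdjOnly : ∀ k l, k < l → l < m → G.Adj (c k) (c l) →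
      l = k + 1 ∨ (k = 0 ∧ l = m - 1) := by
    intro k l hkl hlm hadj
    rcases le_or_gt l r with hlr | hlr
    · rw [hcleft k (by omega), hcleft l hlr] at hadj
      exact Or.inl (h₁ind k l hkl hlr hadj)
    · rcases le_or_gt r k with hrk | hrk
      · rw [hcright k hrk, hcright l (by omega)] at hadj
        have := h₂ind (m - l) (m - k) (by omega) (by omega) hadj.symm
        exact Or.inl (by omega)
      · -- k < r < l
        have hD2 : c l ∈ D₂ := hintD₂ l hlr hlm
        rcases Nat.eq_zero_or_pos k with rfl | hk0
        · rw [hc0, ← p₂.getVert_zero] at hadj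
          rw [hcright l (by omega)] at hadj
          have := h₂ind 0 (m - l) (by omega) (by omega) hadj
          exact Or.inr ⟨rfl, by omega⟩
        · exact absurd hadj (hsep _ (hintD₁ k hk0 hrk) _ hD2).2
  -- injectivity
  have hinj : ∀ k l, k < m → l < m → c k = c l → k = l := by
    have key : ∀ k l, k < l → l < m → c k = c l → False := by
      intro k l hkl hlm heq
      rcases le_or_gt l r with hlr | hlr
      · rw [hcleft k (by omega), hcleft l hlr] at heq
        have := aux_getVert_inj h₁path (by omega) (by omega) heq
        omega
      · rcases le_or_gt r k with hrk | hrk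
        · rw [hcright k hrk, hcright l (by omega)] at heq
          have := aux_getVert_inj h₂path (by omega) (by omega) heq
          omega
        · have hD2 : c l ∈ D₂ := hintD₂ l hlr hlm
          rcases Nat.eq_zero_or_pos k with rfl | hk0
          · rw [hc0] at heq
            exact hx2 (heq ▸ hD2)
          · exact (hsep _ (hintD₁ k hk0 hrk) _ hD2).1 heq
    intro k l hk hl heq
    rcases lt_trichotomy k l with h | h | h
    · exact absurd (key k l h hl heq) not_false
    · exact h
    · exact absurd (key l k h hk heq.symm) not_false
  refine ⟨m, by omega, ⟨?_⟩⟩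
  have hcycadj : ∀ u v : Fin m, (cycleGraph m).Adj u v ↔
      (u.val = v.val + 1 ∨ v.val = u.val + 1 ∨ (u.val = 0 ∧ v.val = m - 1) ∨
        (v.val = 0 ∧ u.val = m - 1)) := cycleGraph_adj_iff (by omega)
  refine ⟨⟨fun i => c i.val, fun i j h => Fin.ext (hinj _ _ i.isLt j.isLt h)⟩, ?_⟩
  intro u v
  show G.Adj (c u.val) (c v.val) ↔ (cycleGraph m).Adj u v
  rw [hcycadj u v]
  constructor
  · intro hadj
    rcases lt_trichotomy u.val v.val with h | h | h
    · rcases hAdjOnly u.val v.val h v.isLt hadj with h' | h'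
      · tauto
      · tauto
    · exact absurd (show c u.val = c v.val by rw [h]) (fun he => G.irrefl (he ▸ hadj))
    · rcases hAdjOnly v.val u.val h u.isLt hadj.symm with h' | h'
      · tauto
      · tauto
  · intro h
    rcases h with h | h | h | h
    · have := hAdjSucc v.val (by omega)
      rw [(by omega : v.val + 1 = u.val)] at this
      exact this.symm
    · have := hAdjSucc u.val (by omega)
      rw [(by omega : u.val + 1 = v.val)] at this
      exact this
    · have := hAdjWrap
      rw [(by omega : m - 1 = v.val), (by omega : (0:ℕ) = u.val)] at this
      exact this.symm
    · have := hAdjWrap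
      rw [(by omega : m - 1 = u.val), (by omega : (0:ℕ) = v.val)] at this
      exact this


theorem minsep_clique_of_chordal {G : SimpleGraph V} (hch : IsChordal G) {S : Set V}
    (hS : IsMinSep G S) : ∀ x ∈ S, ∀ y ∈ S, x ≠ y → G.Adj x y := by
  intro x hx y hy hxy
  by_contra hnadj
  obtain ⟨D₁, D₂, hD₁, hD₂, hne, hF₁, hF₂⟩ := hS
  have hsep : ∀ u ∈ D₁, ∀ v ∈ D₂, u ≠ v ∧ ¬ G.Adj u v :=
    fun u hu v hv => hD₁.not_adj hD₂ hne hu hv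
  have hx1 : x ∉ D₁ := fun h => hD₁.2.1.ne_of_mem h hx rfl
  have hy1 : y ∉ D₁ := fun h => hD₁.2.1.ne_of_mem h hy rfl
  have hx2 : x ∉ D₂ := fun h => hD₂.2.1.ne_of_mem h hx rfl
  have hy2 : y ∉ D₂ := fun h => hD₂.2.1.ne_of_mem h hy rfl
  obtain ⟨p₁, ha, hb, hc, hd⟩ :=
    exists_induced_arc hx1 hy1 hxy hnadj (hF₁ x hx) (hF₁ y hy) hD₁.2.2.1
  obtain ⟨p₂, ha', hb', hc', hd'⟩ :=
    exists_induced_arc hx2 hy2 hxy hnadj (hF₂ x hx) (hF₂ y hy) hD₂.2.2.1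
  obtain ⟨m, hm, ⟨e⟩⟩ := cycle_of_two_arcs hsep hx1 hy1 hx2 hy2 hxy hnadj
    p₁ ha hb hc hd p₂ ha' hb' hc' hd'
  exact (hch m hm).false e

lemma cyc_walk {n : ℕ} (hn : 4 ≤ n) :
    ∀ k t (ht2 : 2 ≤ t) (htk : t + k = n - 1),
      ∃ w : (cycleGraph n).Walk ⟨t, by omega⟩ ⟨0, by omega⟩,
        ∀ z ∈ w.support, z.val = 0 ∨ (t ≤ z.val ∧ z.val ≤ n - 1) := by
  intro k
  induction k with
  | zero =>
    intro t ht2 htk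
    have hadj : (cycleGraph n).Adj ⟨t, by omega⟩ ⟨0, by omega⟩ := by
      rw [cycleGraph_adj_iff (by omega)]
      exact Or.inr (Or.inr (Or.inr ⟨rfl, by show t = n - 1; omega⟩))
    refine ⟨Walk.cons hadj Walk.nil, ?_⟩
    intro z hz
    rcases (by simpa using hz : z = (⟨t, by omega⟩ : Fin n) ∨ z = (⟨0, by omega⟩ : Fin n))
      with rfl | rfl
    · exact Or.inr ⟨le_rfl, by omega⟩
    · exact Or.inl rfl
  | succ k ih =>
    intro t ht2 htk
    obtain ⟨w', hw'⟩ := ih (t + 1) (by omega) (by omega)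
    have hadj : (cycleGraph n).Adj ⟨t, by omega⟩ ⟨t + 1, by omega⟩ := by
      rw [cycleGraph_adj_iff (by omega)]
      exact Or.inr (Or.inl rfl)
    refine ⟨Walk.cons hadj w', ?_⟩
    intro z hz
    rcases (by simpa using hz : z = (⟨t, by omega⟩ : Fin n) ∨ z ∈ w'.support) with rfl | hz'
    · exact Or.inr ⟨le_rfl, by omega⟩
    · rcases hw' z hz' with h | h
      · exact Or.inl h
      · exact Or.inr ⟨by omega, h.2⟩

theorem chordal_of_minsep_clique [Fintype V] {G : SimpleGraph V}
    (hcl : ∀ S : Set V, IsMinSep G S → ∀ x ∈ S, ∀ y ∈ S, x ≠ y → G.Adj x y) :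
    IsChordal G := by
  intro n hn
  refine ⟨fun e => ?_⟩
  have hadj_iff : ∀ u v : Fin n, G.Adj (e u) (e v) ↔ (cycleGraph n).Adj u v :=
    fun u v => e.map_adj_iff
  have hinj : Function.Injective e := e.injective
  set a : V := e ⟨0, by omega⟩ with hadef
  set b : V := e ⟨2, by omega⟩ with hbdef
  have hab : a ≠ b := fun h => by
    have := hinj h
    rw [Fin.mk.injEq] at this
    omega
  have hnadj : ¬ G.Adj a b := by
    rw [hadef, hbdef, hadj_iff, cycleGraph_adj_iff (by omega)]
    simp only [not_or]
    omega
  obtain ⟨S, haS, hbS, hsep, hmin, -, -, -, -, -⟩ := exists_minimal_sep hab hnadj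
  -- the vertex 1 of the cycle belongs to S
  have h1S : e ⟨1, by omega⟩ ∈ S := by
    by_contra h1
    refine hsep (Avoid.trans (u := a) (v := e ⟨1, by omega⟩) (w := b) ?_ ?_)
    · refine Avoid.adj ?_ haS h1
      rw [hadef, hadj_iff, cycleGraph_adj_iff (by omega)]
      exact Or.inr (Or.inl rfl)
    · refine Avoid.adj ?_ h1 hbS
      rw [hbdef, hadj_iff, cycleGraph_adj_iff (by omega)]
      exact Or.inr (Or.inl rfl)
  -- some vertex of the long arc belongs to S
  have hjS : ∃ j : Fin n, 3 ≤ j.val ∧ j.val ≤ n - 1 ∧ e j ∈ S := by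
    by_contra hno
    push_neg at hno
    obtain ⟨w, hw⟩ := cyc_walk hn (n - 3) 2 (by omega) (by omega)
    refine hsep (Avoid.symm ⟨w.map e.toHom, ?_⟩)
    intro z hz
    rw [Walk.support_map, List.mem_map] at hz
    obtain ⟨zc, hzc, rfl⟩ := hz
    rcases hw zc hzc with h | h
    · have : zc = (⟨0, by omega⟩ : Fin n) := Fin.ext h
      rw [this]; exact haS
    · rcases Nat.lt_or_ge zc.val 3 with h3 | h3
      · have : zc = (⟨2, by omega⟩ : Fin n) := Fin.ext (by show zc.val = 2; omega)
        rw [this]; exact hbS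
      · exact hno zc h3 h.2
  obtain ⟨j, hj3, hjn, hjS'⟩ := hjS
  have hne : e ⟨1, by omega⟩ ≠ e j := fun h => by
    have := hinj h
    rw [Fin.ext_iff] at this
    simp only [] at this
    omega
  have := hcl S hmin _ h1S _ hjS' hne
  rw [hadj_iff, cycleGraph_adj_iff (by omega)] at this
  simp only [] at this
  omega


/-- A finite graph is chordal iff every two of its minimal separators are noncrossing. -/
theorem statement_3 [Fintype V] (G : SimpleGraph V) :
    IsChordal G ↔ ∀ S₁ S₂ : Set V, IsMinSep G S₁ → IsMinSep G S₂ → ¬ Crosses G S₁ S₂ := by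
  constructor
  · intro hch S₁ S₂ h1 h2 hcross
    obtain ⟨D, D', hD, hD', hne, ⟨x, hx⟩, ⟨y, hy⟩⟩ := hcross
    obtain ⟨hne', hnadj⟩ := hD.not_adj hD' hne hx.2 hy.2
    exact hnadj (minsep_clique_of_chordal hch h2 x hx.1 y hy.1 hne')
  · intro hpar
    apply chordal_of_minsep_clique
    intro S hS x hx y hy hxy
    by_contra hnadj
    obtain ⟨S₁, hxS₁, hyS₁, hsep, hmin₁, hca, hcb, hnecomp, hxmem, hymem⟩ :=
      exists_minimal_sep hxy hnadj
    exact hpar S₁ S hmin₁ hS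
      ⟨compSet G S₁ x, compSet G S₁ y, hca, hcb, hnecomp, ⟨x, hx, hxmem⟩, ⟨y, hy, hymem⟩⟩
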